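/- Let H, H⁺, H⁻ be as in the parameterized Morse–Palais setting: Λ a topological space, J : Λ × B_H(θ,2δ) → ℝ continuous with each J(λ,·) continuously directionally differentiable, J(λ,θ) = 0, D₂J(λ,θ) = 0, and suppose H⁻ = {θ} and D₂J(λ,x)x > p(‖x‖) for all (λ,x) ∈ Λ × (B̄_H(θ,δ)\{θ}) with p : (0,δ] → (0,∞) non-decreasing. Define ψ(λ,x) = (√(J(λ,x))/‖x‖)·x for x ≠ θ and ψ(λ,θ) = θ. Then ψ is well-defined (J(λ,x) > 0 for x ≠ θ), continuous, J(λ,x) = ‖ψ(λ,x)‖², and for each fixed λ the map x ↦ ψ(λ,x) is injective on B̄_H(θ,δ). -/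

import Mathlib

/-- Parameterized Morse–Palais, case `H⁻ = {θ}` (construction of `ψ`): with
`J : Λ × B(θ,2δ) → ℝ` continuous, each `J(λ,·)` continuously directionally
differentiable, `J(λ,θ) = 0`, `D₂J(λ,θ) = 0`, and `D₂J(λ,x)x > p(‖x‖)` on the
punctured closed ball of radius `δ` with `p` non-decreasing and positive, the map
`ψ(λ,x) = (√(J(λ,x))/‖x‖)·x` (and `ψ(λ,θ) = θ`) is well-defined (`J(λ,x) > 0` for
`x ≠ θ`), continuous, satisfies `J(λ,x) = ‖ψ(λ,x)‖²`, and `ψ(λ,·)` is injective on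
the closed ball of radius `δ`. -/
theorem statement17 {Λ H : Type*} [TopologicalSpace Λ]
    [NormedAddCommGroup H] [NormedSpace ℝ H]
    (δ : ℝ) (hδ : 0 < δ) (J : Λ → H → ℝ) (D2J : Λ → H → H → ℝ)
    (hJc : ContinuousOn (fun q : Λ × H => J q.1 q.2)
      (Set.univ ×ˢ Metric.ball 0 (2 * δ)))
    (hdiff : ∀ lam : Λ, ∀ x ∈ Metric.ball (0 : H) (2 * δ), ∀ u : H,
      Filter.Tendsto (fun t : ℝ => t⁻¹ * (J lam (x + t • u) - J lam x))
        (nhdsWithin 0 {(0 : ℝ)}ᶜ) (nhds (D2J lam x u)))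
    (hDcont : ∀ lam : Λ, ContinuousOn (fun q : H × H => D2J lam q.1 q.2)
      (Metric.ball 0 (2 * δ) ×ˢ Set.univ))
    (hJ0 : ∀ lam : Λ, J lam 0 = 0) (hD0 : ∀ (lam : Λ) (u : H), D2J lam 0 u = 0)
    (p : ℝ → ℝ)
    (hp_pos : ∀ t ∈ Set.Ioc (0 : ℝ) δ, 0 < p t)
    (hp_mono : ∀ s t : ℝ, s ∈ Set.Ioc (0 : ℝ) δ → t ∈ Set.Ioc (0 : ℝ) δ →
      s ≤ t → p s ≤ p t)
    (hbound : ∀ lam : Λ, ∀ x : H, ‖x‖ ≤ δ → x ≠ 0 → p ‖x‖ < D2J lam x x) :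
    ∀ ψ : Λ → H → H, (∀ lam : Λ, ψ lam 0 = 0) →
      (∀ (lam : Λ) (x : H), x ≠ 0 → ψ lam x = (Real.sqrt (J lam x) / ‖x‖) • x) →
      (∀ lam : Λ, ∀ x : H, ‖x‖ ≤ δ → x ≠ 0 → 0 < J lam x) ∧
        ContinuousOn (fun q : Λ × H => ψ q.1 q.2)
          (Set.univ ×ˢ Metric.closedBall 0 δ) ∧
        (∀ lam : Λ, ∀ x : H, ‖x‖ ≤ δ → J lam x = ‖ψ lam x‖ ^ 2) ∧
        ∀ lam : Λ, ∀ x₁ x₂ : H, ‖x₁‖ ≤ δ → ‖x₂‖ ≤ δ →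
          ψ lam x₁ = ψ lam x₂ → x₁ = x₂ := by
  intro ψ hψ0 hψ
  have hδ2 : δ < 2 * δ := by linarith
  -- homogeneity of the directional derivative
  have hhom : ∀ lam : Λ, ∀ x ∈ Metric.ball (0:H) (2*δ), ∀ (u : H) (t : ℝ), t ≠ 0 →
      D2J lam x (t • u) = t * D2J lam x u := by
    intro lam x hx u t ht
    have h1 := hdiff lam x hx (t • u)
    have h2 := hdiff lam x hx u
    have hmap : Filter.Tendsto (fun s : ℝ => s * t) (nhdsWithin 0 {(0:ℝ)}ᶜ)
        (nhdsWithin 0 {(0:ℝ)}ᶜ) := by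
      apply tendsto_nhdsWithin_of_tendsto_nhds_of_eventually_within
      · simpa using ((Filter.tendsto_id.mul_const t).mono_left nhdsWithin_le_nhds :
          Filter.Tendsto (fun s : ℝ => s * t) (nhdsWithin 0 {(0:ℝ)}ᶜ) (nhds (0 * t)))
      · exact eventually_mem_nhdsWithin.mono fun s hs => mul_ne_zero hs ht
    have h3 : Filter.Tendsto
        (fun s : ℝ => t * ((s*t)⁻¹ * (J lam (x + (s*t) • u) - J lam x)))
        (nhdsWithin 0 {(0:ℝ)}ᶜ) (nhds (t * D2J lam x u)) := (h2.comp hmap).const_mul t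
    have h4 : Filter.Tendsto (fun s : ℝ => s⁻¹ * (J lam (x + s • (t • u)) - J lam x))
        (nhdsWithin 0 {(0:ℝ)}ᶜ) (nhds (t * D2J lam x u)) := by
      refine h3.congr' (eventually_mem_nhdsWithin.mono fun s hs => ?_)
      have : (s*t) • u = s • (t • u) := by rw [mul_smul]
      rw [this]
      simp only [mul_inv, mul_comm s⁻¹ t⁻¹, ← mul_assoc, mul_inv_cancel₀ ht, one_mul]
    exact tendsto_nhds_unique h1 h4
  -- the radial function and its derivative
  have hderiv : ∀ lam : Λ, ∀ x : H, ∀ t : ℝ, t • x ∈ Metric.ball (0:H) (2*δ) →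
      HasDerivAt (fun s : ℝ => J lam (s • x)) (D2J lam (t • x) x) t := by
    intro lam x t ht
    rw [hasDerivAt_iff_tendsto_slope_zero]
    have := hdiff lam (t • x) ht x
    refine this.congr (fun s => ?_)
    rw [add_smul, smul_eq_mul]
  -- strict monotonicity of t ↦ J lam (t • x) on [0,1]
  have hmono : ∀ lam : Λ, ∀ x : H, ‖x‖ ≤ δ → x ≠ 0 →
      StrictMonoOn (fun t : ℝ => J lam (t • x)) (Set.Icc 0 1) := by
    intro lam x hx hx0
    have hmem : ∀ t : ℝ, t ∈ Set.Icc (0:ℝ) 1 → t • x ∈ Metric.ball (0:H) (2*δ) := by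
      intro t ht
      rw [Metric.mem_ball, dist_zero_right, norm_smul, Real.norm_eq_abs,
        abs_of_nonneg ht.1]
      calc t * ‖x‖ ≤ 1 * ‖x‖ := by
            apply mul_le_mul_of_nonneg_right ht.2 (norm_nonneg x)
        _ ≤ δ := by rw [one_mul]; exact hx
        _ < 2 * δ := hδ2
    apply strictMonoOn_of_hasDerivWithinAt_pos (f' := fun t => D2J lam (t • x) x)
      (convex_Icc 0 1)
    · intro t ht
      exact (hderiv lam x t (hmem t ht)).continuousAt.continuousWithinAt
    · intro t ht
      rw [interior_Icc] at ht
      exact (hderiv lam x t (hmem t ⟨le_of_lt ht.1, le_of_lt ht.2⟩)).hasDerivWithinAt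
    · intro t ht
      rw [interior_Icc] at ht
      have htm := hmem t ⟨le_of_lt ht.1, le_of_lt ht.2⟩
      have htx0 : t • x ≠ 0 := smul_ne_zero (ne_of_gt ht.1) hx0
      have htxδ : ‖t • x‖ ≤ δ := by
        rw [norm_smul, Real.norm_eq_abs, abs_of_pos ht.1]
        calc t * ‖x‖ ≤ 1 * ‖x‖ :=
              mul_le_mul_of_nonneg_right (le_of_lt ht.2) (norm_nonneg x)
          _ ≤ δ := by rw [one_mul]; exact hx
      have hb := hbound lam (t • x) htxδ htx0
      have hp := hp_pos ‖t • x‖ ⟨norm_pos_iff.mpr htx0, htxδ⟩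
      have hDD : 0 < D2J lam (t • x) (t • x) := lt_trans hp hb
      have : D2J lam (t • x) (t • x) = t * D2J lam (t • x) x :=
        hhom lam (t • x) htm x t (ne_of_gt ht.1)
      rw [this] at hDD
      rcases mul_pos_iff.mp hDD with ⟨_, h⟩ | ⟨h, _⟩
      · exact h
      · linarith [ht.1]
  -- positivity
  have hpos : ∀ lam : Λ, ∀ x : H, ‖x‖ ≤ δ → x ≠ 0 → 0 < J lam x := by
    intro lam x hx hx0
    have := hmono lam x hx hx0 (Set.mem_Icc.mpr ⟨le_refl 0, zero_le_one⟩)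
      (Set.mem_Icc.mpr ⟨zero_le_one, le_refl 1⟩) zero_lt_one
    simpa [hJ0 lam] using this
  -- J = ‖ψ‖²
  have hsq : ∀ lam : Λ, ∀ x : H, ‖x‖ ≤ δ → J lam x = ‖ψ lam x‖ ^ 2 := by
    intro lam x hx
    by_cases hx0 : x = 0
    · simp [hx0, hψ0 lam, hJ0 lam]
    · have hJpos := hpos lam x hx hx0
      rw [hψ lam x hx0, norm_smul, Real.norm_eq_abs,
        abs_of_nonneg (div_nonneg (Real.sqrt_nonneg _) (norm_nonneg x)),
        div_mul_cancel₀ _ (norm_ne_zero_iff.mpr hx0),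
        Real.sq_sqrt (le_of_lt hJpos)]
  refine ⟨hpos, ?_, hsq, ?_⟩
  · -- continuity
    have hsub : (Set.univ ×ˢ Metric.closedBall (0:H) δ : Set (Λ × H)) ⊆
        Set.univ ×ˢ Metric.ball 0 (2*δ) := by
      intro q hq
      exact ⟨trivial, Metric.closedBall_subset_ball hδ2 hq.2⟩
    have hJc' : ContinuousOn (fun q : Λ × H => J q.1 q.2)
        (Set.univ ×ˢ Metric.closedBall (0:H) δ) := hJc.mono hsub
    intro q hq
    rcases eq_or_ne q.2 0 with h0 | h0
    · -- continuity at (lam, 0)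
      rw [ContinuousWithinAt]
      have hval : ψ q.1 q.2 = 0 := by rw [h0]; exact hψ0 q.1
      rw [hval]
      apply squeeze_zero_norm' (a := fun q' : Λ × H => Real.sqrt (J q'.1 q'.2))
      · filter_upwards [self_mem_nhdsWithin] with q' hq'
        have : ‖q'.2‖ ≤ δ := by
          simpa [dist_zero_right] using hq'.2
        rw [hsq q'.1 q'.2 this, Real.sqrt_sq (norm_nonneg _)]
      · have : Real.sqrt (J q.1 q.2) = 0 := by
          rw [h0, hJ0 q.1, Real.sqrt_zero]
        rw [← this]
        exact ((hJc' q hq).sqrt :)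
    · -- continuity at (lam, x₀), x₀ ≠ 0
      have hf : ContinuousWithinAt
          (fun q' : Λ × H => (Real.sqrt (J q'.1 q'.2) / ‖q'.2‖) • q'.2)
          (Set.univ ×ˢ Metric.closedBall (0:H) δ) q := by
        apply ContinuousWithinAt.smul
        · exact ((hJc' q hq).sqrt).div
            (continuous_norm.comp continuous_snd).continuousWithinAt
            (norm_ne_zero_iff.mpr h0)
        · exact continuous_snd.continuousWithinAt
      apply hf.congr_of_eventuallyEq
      · have hopen : {q' : Λ × H | q'.2 ≠ 0} ∈ nhds q :=
          (isOpen_ne_fun continuous_snd continuous_const).mem_nhds h0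
        filter_upwards [nhdsWithin_le_nhds hopen] with q' hq'
        exact hψ q'.1 q'.2 hq'
      · exact hψ q.1 q.2 h0
  · -- injectivity
    intro lam x₁ x₂ h₁ h₂ heq
    rcases eq_or_ne x₁ 0 with h10 | h10
    · rcases eq_or_ne x₂ 0 with h20 | h20
      · rw [h10, h20]
      · exfalso
        have hJ2 := hpos lam x₂ h₂ h20
        have : J lam x₂ = ‖ψ lam x₂‖ ^ 2 := hsq lam x₂ h₂
        rw [← heq, h10, hψ0 lam] at this
        simp at this
        rw [this] at hJ2; exact lt_irrefl 0 hJ2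
    · rcases eq_or_ne x₂ 0 with h20 | h20
      · exfalso
        have hJ1 := hpos lam x₁ h₁ h10
        have : J lam x₁ = ‖ψ lam x₁‖ ^ 2 := hsq lam x₁ h₁
        rw [heq, h20, hψ0 lam] at this
        simp at this
        rw [this] at hJ1; exact lt_irrefl 0 hJ1
      · -- both nonzero
        have hJ1 := hpos lam x₁ h₁ h10
        have hJ2 := hpos lam x₂ h₂ h20
        have hJeq : J lam x₁ = J lam x₂ := by
          rw [hsq lam x₁ h₁, hsq lam x₂ h₂, heq]
        have hs1 : Real.sqrt (J lam x₁) ≠ 0 :=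
          Real.sqrt_ne_zero'.mpr hJ1
        -- x₁ = (‖x₁‖/‖x₂‖) • x₂
        have hkey : x₁ = (‖x₁‖ / ‖x₂‖) • x₂ := by
          have e1 := hψ lam x₁ h10
          have e2 := hψ lam x₂ h20
          rw [e1, e2] at heq
          have : (‖x₁‖ / Real.sqrt (J lam x₁)) • ((Real.sqrt (J lam x₁) / ‖x₁‖) • x₁)
              = (‖x₁‖ / Real.sqrt (J lam x₁)) • ((Real.sqrt (J lam x₂) / ‖x₂‖) • x₂) := by
            rw [heq]
          rw [smul_smul, smul_smul, div_mul_div_comm, div_mul_div_comm] at this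
          rw [mul_comm ‖x₁‖ (Real.sqrt (J lam x₁)),
            div_self (mul_ne_zero hs1 (norm_ne_zero_iff.mpr h10)), one_smul] at this
          have h2n : ‖x₂‖ ≠ 0 := norm_ne_zero_iff.mpr h20
          have hsc : ‖x₁‖ * Real.sqrt (J lam x₂) / (Real.sqrt (J lam x₁) * ‖x₂‖)
              = ‖x₁‖ / ‖x₂‖ := by
            rw [← hJeq]
            field_simp
          exact this.trans (by rw [hsc])
        set c : ℝ := ‖x₁‖ / ‖x₂‖ with hc
        have hcpos : 0 < c :=
          div_pos (norm_pos_iff.mpr h10) (norm_pos_iff.mpr h20)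
        rcases le_total c 1 with hc1 | hc1
        · -- use monotonicity along x₂
          have hm := hmono lam x₂ h₂ h20
          have : c = 1 := by
            apply hm.injOn ⟨le_of_lt hcpos, hc1⟩ ⟨zero_le_one, le_refl 1⟩
            show J lam (c • x₂) = J lam ((1:ℝ) • x₂)
            rw [← hkey, one_smul, hJeq]
          rw [hkey, this, one_smul]
        · -- use monotonicity along x₁
          have hkey' : x₂ = c⁻¹ • x₁ := by
            rw [hkey, smul_smul, inv_mul_cancel₀ (ne_of_gt hcpos), one_smul]
          have hm := hmono lam x₁ h₁ h10
          have hcinv : c⁻¹ ≤ 1 := by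
            rw [inv_le_one_iff₀]; right; exact hc1
          have : c⁻¹ = 1 := by
            apply hm.injOn ⟨le_of_lt (inv_pos.mpr hcpos), hcinv⟩
              ⟨zero_le_one, le_refl 1⟩
            show J lam (c⁻¹ • x₁) = J lam ((1:ℝ) • x₁)
            rw [← hkey', one_smul, hJeq]
          rw [hkey', this, one_smul]
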